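/- Through every improper point a lying on a proper plane Π, there are at least λ+2 affine lines contained in Π, where an affine line is a proper line meeting W, and λ = ind(P,W). -/

import Mathlib

/-- A projective space of dimension at least 3, given by its point set `S` and its
set of lines: any two points lie on a unique line, the Veblen (Pasch) axiom holds,
and there exist two disjoint lines (dimension ≥ 3). -/
structure ProjSpace (S : Type*) where
  L : Set (Set S)
  two_points : ∀ k ∈ L, ∃ a ∈ k, ∃ b ∈ k, a ≠ b
  unique_meet : ∀ k ∈ L, ∀ l ∈ L, k ≠ l → (k ∩ l).Subsingleton
  join : ∀ a b : S, a ≠ b → ∃ k ∈ L, a ∈ k ∧ b ∈ k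
  veblen : ∀ l₁ ∈ L, ∀ l₂ ∈ L, ∀ l₃ ∈ L, ∀ l₄ ∈ L, ∀ p a b c d : S,
    l₁ ≠ l₂ → p ≠ a → p ≠ b → p ≠ c → p ≠ d →
    p ∈ l₁ → a ∈ l₁ → c ∈ l₁ → p ∈ l₂ → b ∈ l₂ → d ∈ l₂ →
    a ∈ l₃ → b ∈ l₃ → c ∈ l₄ → d ∈ l₄ → (l₃ ∩ l₄).Nonempty
  dim3 : ∃ k ∈ L, ∃ l ∈ L, k ∩ l = ∅

namespace ProjSpace

variable {S : Type*}

/-- A subspace: any line through two of its points is contained in it. -/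
def IsSubspace (P : ProjSpace S) (X : Set S) : Prop :=
  ∀ k ∈ P.L, ∀ a ∈ k, ∀ b ∈ k, a ≠ b → a ∈ X → b ∈ X → k ⊆ X

/-- The subspace spanned by a point set. -/
def span (P : ProjSpace S) (X : Set S) : Set S :=
  ⋂₀ {Y | P.IsSubspace Y ∧ X ⊆ Y}

/-- A plane: the span of a line together with a point outside it. -/
def IsPlane (P : ProjSpace S) (Pl : Set S) : Prop :=
  ∃ k ∈ P.L, ∃ a, a ∉ k ∧ Pl = P.span (insert a k)

/-- `HasIndex P W lam`: some line has exactly `lam` points in `W` and every line not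
contained in `W` has at most `lam` points in `W`. -/
def HasIndex (P : ProjSpace S) (W : Set S) (lam : ℕ) : Prop :=
  (∃ k ∈ P.L, (k ∩ W).encard = (lam : ℕ∞)) ∧
    ∀ k ∈ P.L, ¬ k ⊆ W → (k ∩ W).encard ≤ (lam : ℕ∞)

/-- Three lines form a triangle: pairwise distinct, pairwise intersecting,
not concurrent. -/
def LineTriangle (P : ProjSpace S) (k₁ k₂ k₃ : Set S) : Prop :=
  k₁ ∈ P.L ∧ k₂ ∈ P.L ∧ k₃ ∈ P.L ∧ k₁ ≠ k₂ ∧ k₁ ≠ k₃ ∧ k₂ ≠ k₃ ∧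
    (k₁ ∩ k₂).Nonempty ∧ (k₁ ∩ k₃).Nonempty ∧ (k₂ ∩ k₃).Nonempty ∧
    ¬ (k₁ ∩ k₂ ∩ k₃).Nonempty

/-- Parallelism w.r.t. the horizon `W`: the lines meet, and only inside `W`. -/
def Par (W : Set S) (k₁ k₂ : Set S) : Prop :=
  (k₁ ∩ k₂).Nonempty ∧ k₁ ∩ k₂ ⊆ W

end ProjSpace


lemma line_eq_of_two_mem {S : Type*} (P : ProjSpace S) {l l' : Set S}
    (hl : l ∈ P.L) (hl' : l' ∈ P.L) {x y : S} (hxy : x ≠ y)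
    (hx : x ∈ l) (hy : y ∈ l) (hx' : x ∈ l') (hy' : y ∈ l') : l = l' := by
  by_contra h
  exact hxy (P.unique_meet l hl l' hl' h ⟨hx, hx'⟩ ⟨hy, hy'⟩)

lemma isSubspace_span {S : Type*} (P : ProjSpace S) (X : Set S) :
    P.IsSubspace (P.span X) := by
  intro k hk a hak b hbk hab haX hbX x hx
  intro Y hY
  exact hY.1 k hk a hak b hbk hab (haX Y hY) (hbX Y hY) hx

lemma subset_span {S : Type*} (P : ProjSpace S) (X : Set S) : X ⊆ P.span X := by
  intro x hx Y hY
  exact hY.2 hx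

open ProjSpace in
/-- through every improper point on a proper plane there are at least
`lam + 2` affine lines (proper lines meeting `W`) contained in that plane. -/
theorem many_affine_lines_through_improper_point {S : Type*} (P : ProjSpace S)
    (W : Set S) (lam : ℕ) (hlam : 0 < lam) (hind : P.HasIndex W lam)
    (hsize : ∀ k ∈ P.L, 2 * (lam : ℕ∞) + 2 ≤ k.encard)
    (a : S) (ha : a ∈ W) (Pl : Set S) (hPl : P.IsPlane Pl) (hPlprop : ¬ Pl ⊆ W)
    (haPl : a ∈ Pl) :
    (lam : ℕ∞) + 2 ≤
      {l : Set S | l ∈ P.L ∧ ¬ l ⊆ W ∧ (l ∩ W).Nonempty ∧ a ∈ l ∧ l ⊆ Pl}.encard := by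
  classical
  obtain ⟨k, hk, p, hpk, hPleq⟩ := hPl
  have hsub : P.IsSubspace Pl := hPleq ▸ isSubspace_span P _
  have hsubset : insert p k ⊆ Pl := hPleq ▸ subset_span P _
  obtain ⟨b, hbPl, hbW⟩ := Set.not_subset.mp hPlprop
  have hab : a ≠ b := fun h => hbW (h ▸ ha)
  obtain ⟨k₀, hk₀, hak₀, hbk₀⟩ := P.join a b hab
  have hk₀Pl : k₀ ⊆ Pl := hsub k₀ hk₀ a hak₀ b hbk₀ hab haPl hbPl
  have hq : ∃ q ∈ Pl, q ∉ k₀ := by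
    by_cases hkk : k ⊆ k₀
    · obtain ⟨x, hxk, y, hyk, hxy⟩ := P.two_points k hk
      have hkeq : k = k₀ := line_eq_of_two_mem P hk hk₀ hxy hxk hyk (hkk hxk) (hkk hyk)
      exact ⟨p, hsubset (Set.mem_insert p k), fun h => hpk (hkeq ▸ h)⟩
    · obtain ⟨q, hqk, hq0⟩ := Set.not_subset.mp hkk
      exact ⟨q, hsubset (Set.mem_insert_of_mem _ hqk), hq0⟩
  obtain ⟨q, hqPl, hqk₀⟩ := hq
  have hbq : b ≠ q := fun h => hqk₀ (h ▸ hbk₀)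
  obtain ⟨m, hm, hbm, hqm⟩ := P.join b q hbq
  have ham : a ∉ m := by
    intro ham
    have : m = k₀ := line_eq_of_two_mem P hm hk₀ hab ham hbm hak₀ hbk₀
    exact hqk₀ (this ▸ hqm)
  have hmPl : m ⊆ Pl := hsub m hm b hbm q hqm hbq hbPl hqPl
  have hmW : ¬ m ⊆ W := fun h => hbW (h hbm)
  have hmind : (m ∩ W).encard ≤ (lam : ℕ∞) := hind.2 m hm hmW
  have hlamtop : (lam : ℕ∞) ≠ ⊤ := ENat.coe_ne_top lam
  have hmdiff : (lam : ℕ∞) + 2 ≤ (m \ W).encard := by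
    have h1 := Set.encard_diff_add_encard_inter m W
    have h2 := hsize m hm
    have h3 : ((lam : ℕ∞) + 2) + lam ≤ (m \ W).encard + lam := by
      calc ((lam : ℕ∞) + 2) + lam = 2 * lam + 2 := by ring
        _ ≤ m.encard := h2
        _ = (m \ W).encard + (m ∩ W).encard := h1.symm
        _ ≤ (m \ W).encard + lam := add_le_add le_rfl hmind
    exact (WithTop.add_le_add_iff_right hlamtop).mp h3
  refine le_trans hmdiff ?_
  have hjoin : ∀ x, x ∈ m \ W → ∃ l, l ∈ P.L ∧ a ∈ l ∧ x ∈ l := by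
    intro x hx
    have hax : a ≠ x := fun h => hx.2 (h ▸ ha)
    obtain ⟨l, hl, hal, hxl⟩ := P.join a x hax
    exact ⟨l, hl, hal, hxl⟩
  choose! f hf1 hf2 hf3 using hjoin
  apply Set.encard_le_encard_of_injOn (f := f)
  · intro x hx
    have hax : a ≠ x := fun h => hx.2 (h ▸ ha)
    refine ⟨hf1 x hx, fun h => hx.2 (h (hf3 x hx)), ⟨a, hf2 x hx, ha⟩, hf2 x hx, ?_⟩
    exact hsub (f x) (hf1 x hx) a (hf2 x hx) x (hf3 x hx) hax haPl (hmPl hx.1)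
  · intro x hx y hy hxy
    by_contra hne
    have hlm : f x ≠ m := fun h => ham (h ▸ hf2 x hx)
    exact hne (P.unique_meet (f x) (hf1 x hx) m hm hlm ⟨hf3 x hx, hx.1⟩
      ⟨hxy ▸ hf3 y hy, hy.1⟩)
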